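/- arXiv:1112.0974 — 6 statements merged into one kernel-verified Lean document; each statement's English description precedes it below -/
import Mathlib

section
/- Let l ≥ 1 and k ≥ 1. Let γ^1, ..., γ^k with γ^{k'} = (i^{k'}, α^{k'}) be independent random variables, each uniformly distributed on {1,...,l} × [0,1]. Define c_j^k = min({α^{k'} : 1 ≤ k' ≤ k, i^{k'} = j} ∪ {1}) for each j ∈ {1,...,l}. Then the probability that ∑_{j=1}^l c_j^k < 1 satisfies P(∑_{j=1}^l c_j^k < 1) ≥ ∑_{p ∈ {0,1}^l} (−1)^{p_1 + ... + p_l} (∑_{j=1}^l (1/l)(1 − 1/l)^{p_j})^k. -/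
open MeasureTheory

open scoped ENNReal

lemma fin2cases (x : Fin 2) : x = 0 ∨ x = 1 := by fin_cases x <;> simp

instance : IsProbabilityMeasure (volume.restrict (Set.Icc (0:ℝ) 1)) :=
  ⟨by simp [Real.volume_Icc]⟩

lemma measD (l : ℕ) [NeZero l] (t : Finset (Fin l)) :
    ((PMF.uniformOfFintype (Fin l)).toMeasure.prod (volume.restrict (Set.Icc (0:ℝ) 1)))
      {x : Fin l × ℝ | x.1 ∈ t → 1/(l:ℝ) ≤ x.2}
    = ∑ j : Fin l, (l:ℝ≥0∞)⁻¹ * (if j ∈ t then ENNReal.ofReal (1 - 1/(l:ℝ)) else 1) := by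
  have hl : (0:ℝ) < l := by
    exact_mod_cast Nat.pos_of_ne_zero (NeZero.ne l)
  have hle : (0:ℝ) ≤ 1/(l:ℝ) := by positivity
  have hset : {x : Fin l × ℝ | x.1 ∈ t → 1/(l:ℝ) ≤ x.2}
      = ⋃ j : Fin l, {j} ×ˢ (if j ∈ t then Set.Ici (1/(l:ℝ)) else Set.univ) := by
    ext ⟨i, a⟩
    simp only [Set.mem_setOf_eq, Set.mem_iUnion, Set.mem_prod, Set.mem_singleton_iff]
    constructor
    · intro h
      refine ⟨i, rfl, ?_⟩
      split_ifs with hi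
      · exact h hi
      · trivial
    · rintro ⟨j, rfl, hj⟩ hi
      rw [if_pos hi] at hj
      exact hj
  rw [hset, measure_iUnion ?_ ?_]
  · rw [tsum_fintype]
    refine Finset.sum_congr rfl fun j _ => ?_
    rw [Measure.prod_prod,
      PMF.toMeasure_apply_singleton _ _ (measurableSet_singleton j),
      PMF.uniformOfFintype_apply, Fintype.card_fin]
    congr 1
    split_ifs with hj
    · rw [Measure.restrict_apply measurableSet_Ici]
      have : Set.Ici (1/(l:ℝ)) ∩ Set.Icc 0 1 = Set.Icc (1/(l:ℝ)) 1 := by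
        ext x
        simp only [Set.mem_inter_iff, Set.mem_Ici, Set.mem_Icc]
        constructor
        · rintro ⟨h1, _, h3⟩; exact ⟨h1, h3⟩
        · rintro ⟨h1, h2⟩; exact ⟨h1, le_trans hle h1, h2⟩
      rw [this, Real.volume_Icc]
    · rw [Measure.restrict_apply MeasurableSet.univ, Set.univ_inter, Real.volume_Icc]
      simp
  · intro i j hij
    rw [Function.onFun, Set.disjoint_left]
    rintro ⟨x1, x2⟩ ⟨h1, -⟩ ⟨h2, -⟩
    simp only [Set.mem_singleton_iff] at h1 h2
    exact hij (h1.symm.trans h2)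
  · intro j
    refine (measurableSet_singleton j).prod ?_
    split_ifs
    · exact measurableSet_Ici
    · exact MeasurableSet.univ

/-- For `l ≥ 1`, `k ≥ 1`, and `k` independent draws `γ^{k'} = (i^{k'}, α^{k'})`,
each uniform on `{1,…,l} × [0,1]` (modeled by the `k`-fold product of the product of the
uniform measure on `Fin l` and Lebesgue measure restricted to `[0,1]`), with
`c_j^k = min({α^{k'} : i^{k'} = j} ∪ {1})`, the probability that `∑_j c_j^k < 1` is at least
`∑_{p ∈ {0,1}^l} (−1)^{∑_j p_j} (∑_j (1/l)(1 − 1/l)^{p_j})^k`. -/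
theorem stmt_0 (l k : ℕ) [NeZero l] (hk : 1 ≤ k)
    (μ : Measure (Fin l × ℝ))
    (hμ : μ = (PMF.uniformOfFintype (Fin l)).toMeasure.prod
      (volume.restrict (Set.Icc (0:ℝ) 1)))
    (π : Measure (Fin k → Fin l × ℝ))
    (hπ : π = Measure.pi fun _ => μ)
    (c : (Fin k → Fin l × ℝ) → Fin l → ℝ)
    (hc : ∀ γ j, c γ j = sInf (insert (1:ℝ) {a : ℝ | ∃ k', (γ k').1 = j ∧ (γ k').2 = a})) :
    ∑ p : Fin l → Fin 2, (-1 : ℝ) ^ (∑ j, ((p j : ℕ))) *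
        (∑ j, (1 / (l:ℝ)) * (1 - 1 / (l:ℝ)) ^ ((p j : ℕ))) ^ k
      ≤ (π {γ | ∑ j, c γ j < 1}).toReal := by
  classical
  haveI : IsProbabilityMeasure μ := by rw [hμ]; infer_instance
  haveI : IsProbabilityMeasure π := by rw [hπ]; infer_instance
  haveI : Nonempty (Fin l) := ⟨⟨0, Nat.pos_of_ne_zero (NeZero.ne l)⟩⟩
  have hl : (0:ℝ) < l := by exact_mod_cast Nat.pos_of_ne_zero (NeZero.ne l)
  have hll : (1:ℝ) ≤ l := by exact_mod_cast Nat.one_le_iff_ne_zero.2 (NeZero.ne l)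
  have hle : (0:ℝ) ≤ 1/(l:ℝ) := by positivity
  have h1l : (0:ℝ) ≤ 1 - 1/(l:ℝ) := by
    rw [sub_nonneg, div_le_one hl]; exact hll
  -- the events
  set A : Fin l → Set (Fin k → Fin l × ℝ) :=
    fun j => {γ | ∃ k', (γ k').1 = j ∧ (γ k').2 < 1/(l:ℝ)} with hA
  have hAmeas : ∀ j, MeasurableSet (A j) := by
    intro j
    have : A j = ⋃ k', (fun γ : Fin k → Fin l × ℝ => γ k') ⁻¹' ({j} ×ˢ Set.Iio (1/(l:ℝ))) := by
      ext γ
      constructor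
      · rintro ⟨k', h1, h2⟩
        exact Set.mem_iUnion.2 ⟨k', Set.mem_preimage.2 ⟨h1, h2⟩⟩
      · intro h
        rcases Set.mem_iUnion.1 h with ⟨k', hk'⟩
        rcases Set.mem_preimage.1 hk' with ⟨h1, h2⟩
        exact ⟨k', h1, h2⟩
    rw [this]
    exact MeasurableSet.iUnion fun k' =>
      ((measurableSet_singleton j).prod measurableSet_Iio).preimage (measurable_pi_apply k')
  -- inclusion
  have hsub : (⋂ j, A j) ⊆ {γ | ∑ j, c γ j < 1} := by
    intro γ hγ
    simp only [Set.mem_iInter] at hγ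
    have hcj : ∀ j, c γ j < 1/(l:ℝ) := by
      intro j
      obtain ⟨k', hk1, hk2⟩ := hγ j
      have hmem : (γ k').2 ∈ insert (1:ℝ) {a : ℝ | ∃ k'', (γ k'').1 = j ∧ (γ k'').2 = a} :=
        Set.mem_insert_of_mem _ ⟨k', hk1, rfl⟩
      have hfin : (insert (1:ℝ) {a : ℝ | ∃ k'', (γ k'').1 = j ∧ (γ k'').2 = a}).Finite := by
        apply Set.Finite.insert
        apply Set.Finite.subset (Set.finite_range fun k'' => (γ k'').2)
        rintro a ⟨k'', -, rfl⟩
        exact Set.mem_range_self k''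
      calc c γ j ≤ (γ k').2 := by rw [hc]; exact csInf_le hfin.bddBelow hmem
        _ < 1/(l:ℝ) := hk2
    calc ∑ j, c γ j < ∑ _j : Fin l, 1/(l:ℝ) :=
        Finset.sum_lt_sum_of_nonempty Finset.univ_nonempty (fun j _ => hcj j)
      _ = 1 := by
        rw [Finset.sum_const, Finset.card_univ, Fintype.card_fin, nsmul_eq_mul]
        field_simp
  -- intersections over subsets as product sets
  have hF : ∀ t : Finset (Fin l), (⋂ j ∈ t, (A j)ᶜ)
      = Set.pi Set.univ (fun _ : Fin k => {x : Fin l × ℝ | x.1 ∈ t → 1/(l:ℝ) ≤ x.2}) := by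
    intro t
    ext γ
    simp only [Set.mem_iInter, Set.mem_compl_iff, hA, Set.mem_setOf_eq, Set.mem_pi,
      Set.mem_univ, true_implies]
    constructor
    · intro h k' hk'
      by_contra hlt
      push_neg at hlt
      exact h _ hk' ⟨k', rfl, hlt⟩
    · rintro h j hj ⟨k', h1, h2⟩
      exact absurd (h k' (h1 ▸ hj)) (not_le.2 h2)
  have hFmeas : ∀ t : Finset (Fin l), MeasurableSet (⋂ j ∈ t, (A j)ᶜ) :=
    fun t => MeasurableSet.biInter t.countable_toSet fun j _ => (hAmeas j).compl
  have hiE : MeasurableSet (⋂ j, A j) := MeasurableSet.iInter fun j => hAmeas j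
  -- measure of F t
  have hFmeas' : ∀ t : Finset (Fin l), (π (⋂ j ∈ t, (A j)ᶜ)).toReal
      = (∑ j : Fin l, (1/(l:ℝ)) * (if j ∈ t then (1 - 1/(l:ℝ)) else 1)) ^ k := by
    intro t
    rw [hπ, hF t, Measure.pi_pi]
    rw [Finset.prod_const, Finset.card_univ, Fintype.card_fin, hμ, measD l t,
      ENNReal.toReal_pow]
    congr 1
    rw [ENNReal.toReal_sum (fun j _ => by
      apply ENNReal.mul_ne_top
      · simp [ENNReal.inv_ne_top, NeZero.ne l]
      · split_ifs <;> simp)]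
    refine Finset.sum_congr rfl fun j _ => ?_
    rw [ENNReal.toReal_mul]
    congr 1
    · rw [ENNReal.toReal_inv]
      simp [one_div]
    · split_ifs
      · exact ENNReal.toReal_ofReal h1l
      · simp
  -- inclusion–exclusion via integral
  have key : (π (⋂ j, A j)).toReal
      = ∑ t ∈ (Finset.univ : Finset (Fin l)).powerset,
          (-1:ℝ)^t.card *
            (∑ j : Fin l, (1/(l:ℝ)) * (if j ∈ t then (1 - 1/(l:ℝ)) else 1)) ^ k := by
    rw [← measureReal_def, ← integral_indicator_one hiE]
    have hpt : ∀ γ, Set.indicator (⋂ j, A j) (1 : (Fin k → Fin l × ℝ) → ℝ) γ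
        = ∑ t ∈ (Finset.univ : Finset (Fin l)).powerset,
            (-1:ℝ)^t.card * Set.indicator (⋂ j ∈ t, (A j)ᶜ) (1 : (Fin k → Fin l × ℝ) → ℝ) γ := by
      intro γ
      simp only [Set.indicator_apply, Pi.one_apply]
      have h1 : (if γ ∈ ⋂ j, A j then (1:ℝ) else 0)
          = ∏ j : Fin l, (-(if γ ∈ (A j)ᶜ then (1:ℝ) else 0) + 1) := by
        by_cases h : γ ∈ ⋂ j, A j
        · rw [if_pos h]
          simp only [Set.mem_iInter] at h
          refine (Finset.prod_eq_one fun j _ => ?_).symm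
          rw [if_neg (by simp [h j])]
          ring
        · rw [if_neg h]
          simp only [Set.mem_iInter, not_forall] at h
          obtain ⟨j, hj⟩ := h
          refine (Finset.prod_eq_zero (Finset.mem_univ j) ?_).symm
          rw [if_pos (Set.mem_compl hj)]
          ring
      rw [h1, Finset.prod_add]
      refine Finset.sum_congr rfl fun t _ => ?_
      rw [Finset.prod_const_one, mul_one]
      have h2 : ∏ j ∈ t, -(if γ ∈ (A j)ᶜ then (1:ℝ) else 0)
          = (-1:ℝ)^t.card * ∏ j ∈ t, (if γ ∈ (A j)ᶜ then (1:ℝ) else 0) := by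
        rw [Finset.prod_congr rfl (fun j _ => neg_eq_neg_one_mul _),
          Finset.prod_mul_distrib, Finset.prod_const]
      rw [h2]
      congr 1
      by_cases h : γ ∈ ⋂ j ∈ t, (A j)ᶜ
      · rw [if_pos h]
        simp only [Set.mem_iInter] at h
        exact Finset.prod_eq_one fun j hj => if_pos (h j hj)
      · rw [if_neg h]
        simp only [Set.mem_iInter, not_forall] at h
        obtain ⟨j, hj, hj2⟩ := h
        exact Finset.prod_eq_zero hj (if_neg hj2)
    have hint : ∀ t ∈ (Finset.univ : Finset (Fin l)).powerset,
        Integrable (fun γ => (-1:ℝ)^t.card *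
          Set.indicator (⋂ j ∈ t, (A j)ᶜ) (1 : (Fin k → Fin l × ℝ) → ℝ) γ) π := by
      intro t _
      exact ((integrable_const (1:ℝ)).indicator (hFmeas t)).const_mul _
    rw [integral_congr_ae (Filter.Eventually.of_forall hpt), integral_finset_sum _ hint]
    refine Finset.sum_congr rfl fun t _ => ?_
    rw [integral_const_mul, integral_indicator_one (hFmeas t), measureReal_def, hFmeas' t]
  -- reindex the sum
  have hre : ∑ p : Fin l → Fin 2, (-1 : ℝ) ^ (∑ j, ((p j : ℕ))) *
        (∑ j, (1 / (l:ℝ)) * (1 - 1 / (l:ℝ)) ^ ((p j : ℕ))) ^ k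
      = ∑ t ∈ (Finset.univ : Finset (Fin l)).powerset,
          (-1:ℝ)^t.card *
            (∑ j : Fin l, (1/(l:ℝ)) * (if j ∈ t then (1 - 1/(l:ℝ)) else 1)) ^ k := by
    refine Finset.sum_bij' (fun p _ => Finset.univ.filter (fun j => p j = 1))
      (fun t _ => fun j => if j ∈ t then (1 : Fin 2) else 0)
      (fun p _ => Finset.mem_powerset.2 (Finset.filter_subset _ _))
      (fun t _ => Finset.mem_univ _) ?_ ?_ ?_
    · intro p _
      funext j
      rcases fin2cases (p j) with h | h <;> simp [h]
    · intro t _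
      ext j
      by_cases h : j ∈ t <;> simp [h]
    · intro p _
      have hcard : ∑ j, ((p j : ℕ)) = (Finset.univ.filter (fun j => p j = 1)).card := by
        rw [Finset.card_filter]
        refine Finset.sum_congr rfl fun j _ => ?_
        rcases fin2cases (p j) with h | h <;> simp [h]
      have hbase : ∑ j, (1 / (l:ℝ)) * (1 - 1 / (l:ℝ)) ^ ((p j : ℕ))
          = ∑ j : Fin l, (1/(l:ℝ)) *
              (if j ∈ Finset.univ.filter (fun j => p j = 1) then (1 - 1/(l:ℝ)) else 1) := by
        refine Finset.sum_congr rfl fun j _ => ?_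
        rcases fin2cases (p j) with h | h <;> simp [h]
      rw [hcard, hbase]
  -- conclude
  rw [hre, ← key]
  exact ENNReal.toReal_mono (measure_ne_top π _) (measure_mono hsub)
end

section
/- Let l ≥ 1, let Ω be an arbitrary nonempty set, and let u : Ω → Δ_l be any function taking values in the unit simplex. Let (γ^k)_{k ∈ ℕ} with γ^k = (i^k, α^k) be an i.i.d. sequence, each term uniformly distributed on {1,...,l} × [0,1], and for each k define the set of unassigned points U^k_γ = {x ∈ Ω : u_{i^{k'}}(x) ≤ α^{k'} for all 1 ≤ k' ≤ k}. Then almost surely there exists k ∈ ℕ with U^k_γ = ∅; that is, the probabilistic rounding process assigns a label to every point of Ω after finitely many steps with probability 1. -/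
open MeasureTheory

/-- Let `l ≥ 1`, `Ω` an arbitrary nonempty set, `u : Ω → Δ_l` any function into
the unit simplex, and `(γ^k)_{k∈ℕ}`, `γ^k = (i^k, α^k)`, an i.i.d. sequence, each term uniform
on `{1,…,l} × [0,1]` (modeled by independent random variables on a probability space `(Θ, P)`,
each with law the product of the uniform measure on `Fin l` and Lebesgue measure restricted to
`[0,1]`). With `U^k = {x ∈ Ω : u_{i^{k'}}(x) ≤ α^{k'} for all first k draws k'}`, almost surely
there exists `k` with `U^k = ∅`. -/
theorem stmt_2 (l : ℕ) [NeZero l]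
    {Ω : Type*} [Nonempty Ω] (u : Ω → Fin l → ℝ)
    (hu : ∀ x, (∀ i, 0 ≤ u x i) ∧ ∑ i, u x i = 1)
    {Θ : Type*} [MeasurableSpace Θ] (P : Measure Θ) [IsProbabilityMeasure P]
    (γ : ℕ → Θ → Fin l × ℝ)
    (hmeas : ∀ k, Measurable (γ k))
    (hindep : ProbabilityTheory.iIndepFun γ P)
    (hdist : ∀ k, P.map (γ k) = (PMF.uniformOfFintype (Fin l)).toMeasure.prod
      (volume.restrict (Set.Icc (0:ℝ) 1)))
    (U : Θ → ℕ → Set Ω)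
    (hU : ∀ θ k, U θ k = {x : Ω | ∀ k' < k, u x ((γ k' θ).1) ≤ (γ k' θ).2}) :
    P {θ | ∃ k : ℕ, U θ k = ∅} = 1 := by
  classical
  have hl : 0 < l := Nat.pos_of_ne_zero (NeZero.ne l)
  have hlR : (0:ℝ) < l := by exact_mod_cast hl
  set c : ℝ := (2 * l : ℝ)⁻¹ with hc
  have hc0 : 0 < c := by rw [hc]; positivity
  have hc1 : c ≤ 1 := by
    rw [hc]
    apply inv_le_one_of_one_le₀
    have h1l : (1:ℝ) ≤ l := by exact_mod_cast hl
    linarith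
  have hclt : c < (l:ℝ)⁻¹ := by
    rw [hc]
    apply inv_strictAnti₀ hlR
    linarith
  set B : Fin l → Set (Fin l × ℝ) := fun i => ({i} : Set (Fin l)) ×ˢ Set.Iio c with hB
  have hBmeas : ∀ i, MeasurableSet (B i) :=
    fun i => (measurableSet_singleton i).prod measurableSet_Iio
  set s : Fin l → ℕ → Set Θ := fun i k => γ k ⁻¹' B i with hs
  have hsmeas : ∀ i k, MeasurableSet (s i k) := fun i k => (hmeas k) (hBmeas i)
  have hμ : ∀ i k, P (s i k) = (l : ENNReal)⁻¹ * ENNReal.ofReal c := by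
    intro i k
    have h1 : P (s i k) = (P.map (γ k)) (B i) :=
      (Measure.map_apply (hmeas k) (hBmeas i)).symm
    rw [h1, hdist k, hB, Measure.prod_prod]
    congr 1
    · rw [PMF.toMeasure_apply_singleton _ _ (measurableSet_singleton i),
        PMF.uniformOfFintype_apply]
      simp
    · rw [Measure.restrict_apply measurableSet_Iio]
      have hset : Set.Iio c ∩ Set.Icc (0:ℝ) 1 = Set.Ico 0 c := by
        ext r
        simp only [Set.mem_inter_iff, Set.mem_Iio, Set.mem_Icc, Set.mem_Ico]
        constructor
        · rintro ⟨h1, h2, _⟩; exact ⟨h2, h1⟩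
        · rintro ⟨h1, h2⟩; exact ⟨h2, h1, le_trans h2.le hc1⟩
      rw [hset, Real.volume_Ico]
      simp
  have hpos : (l : ENNReal)⁻¹ * ENNReal.ofReal c ≠ 0 := by
    apply mul_ne_zero
    · exact ENNReal.inv_ne_zero.2 (ENNReal.natCast_ne_top l)
    · exact (ENNReal.ofReal_pos.2 hc0).ne'
  have hindepset : ∀ i, ProbabilityTheory.iIndepSet (s i) P := by
    intro i
    rw [ProbabilityTheory.iIndepSet_iff_meas_biInter (fun k => hsmeas i k)]
    intro S
    exact hindep.measure_inter_preimage_eq_mul S (fun k _ => hBmeas i)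
  have hone : ∀ i, P (⋃ k, s i k) = 1 := by
    intro i
    have hBC : P (Filter.limsup (s i) Filter.atTop) = 1 := by
      apply ProbabilityTheory.measure_limsup_eq_one (fun k => hsmeas i k) (hindepset i)
      simp only [hμ i]
      exact ENNReal.tsum_const_eq_top_of_ne_zero hpos
    refine le_antisymm prob_le_one ?_
    rw [← hBC]
    apply measure_mono
    rw [Filter.limsup_eq_iInf_iSup_of_nat]
    refine le_trans (iInf_le _ 0) ?_
    simp
  have hAone : P (⋂ i, ⋃ k, s i k) = 1 := by
    have hm : MeasurableSet (⋂ i, ⋃ k, s i k) :=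
      MeasurableSet.iInter (fun i => MeasurableSet.iUnion (hsmeas i))
    rw [← prob_compl_eq_zero_iff hm, Set.compl_iInter]
    refine le_antisymm (le_trans (measure_iUnion_le _) ?_) zero_le
    have hz : ∀ i, P (⋃ k, s i k)ᶜ = 0 := fun i =>
      (prob_compl_eq_zero_iff (MeasurableSet.iUnion (hsmeas i))).2 (hone i)
    simp only [hz, tsum_zero, le_refl]
  refine le_antisymm prob_le_one ?_
  rw [← hAone]
  apply measure_mono
  intro θ hθ
  simp only [Set.mem_iInter, Set.mem_iUnion] at hθ
  choose k hk using hθ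
  refine ⟨(Finset.univ.sup k) + 1, ?_⟩
  rw [hU]
  ext x
  simp only [Set.mem_setOf_eq, Set.mem_empty_iff_false, iff_false]
  intro hx
  obtain ⟨i, hi⟩ : ∃ i, (l:ℝ)⁻¹ ≤ u x i := by
    by_contra h
    push_neg at h
    have hlt : (∑ i, u x i) < ∑ _i : Fin l, (l:ℝ)⁻¹ :=
      Finset.sum_lt_sum_of_nonempty (Finset.univ_nonempty) (fun i _ => h i)
    rw [(hu x).2, Finset.sum_const, Finset.card_univ, Fintype.card_fin, nsmul_eq_mul,
      mul_inv_cancel₀ hlR.ne'] at hlt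
    exact lt_irrefl _ hlt
  have hki : k i < Finset.univ.sup k + 1 :=
    Nat.lt_succ_of_le (Finset.le_sup (Finset.mem_univ i))
  have hxle := hx (k i) hki
  have hmem := hk i
  rw [hs] at hmem
  simp only [Set.mem_preimage, hB, Set.mem_prod, Set.mem_singleton_iff, Set.mem_Iio] at hmem
  rw [hmem.1] at hxle
  have := hmem.2
  linarith
end

section
/- Let l ≥ 1, let Ω = (0,1)^m ⊆ ℝ^m, let u : Ω → Δ_l be measurable, and let s ∈ L^1(Ω)^l. For a finite sequence γ = (γ^1, ..., γ^k) with γ^{k'} = (i^{k'}, α^{k'}) ∈ {1,...,l} × [0,1], define recursively u^0_γ = u and u^{k'}_γ(x) = e^{i^{k'}} if u^{k'−1}_{γ, i^{k'}}(x) > α^{k'}, and u^{k'}_γ(x) = u^{k'−1}_γ(x) otherwise. Then for every k ≥ 0, the expectation of the data term over γ drawn from the k-fold product of the uniform measure on {1,...,l} × [0,1] is invariant under the rounding process: E_γ [∫_Ω ⟨u^k_γ(x), s(x)⟩ dx] = ∫_Ω ⟨u(x), s(x)⟩ dx. -/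
open MeasureTheory

set_option linter.unusedSectionVars false
set_option linter.unusedVariables false
set_option maxHeartbeats 1000000

section Aux

variable {l : ℕ} [NeZero l]

/-- one rounding step applied to a simplex vector -/
noncomputable def stepf (v : Fin l → ℝ) (p : Fin l × ℝ) : Fin l → ℝ :=
  if p.2 < v p.1 then Pi.single p.1 1 else v

/-- iterated rounding driven by a sequence of (label, threshold) pairs -/
noncomputable def Rf (g : ℕ → Fin l × ℝ) : ℕ → (Fin l → ℝ) → Fin l → ℝ
  | 0, v => v
  | n+1, v => stepf (Rf g n v) (g n)

lemma Rf_congr {g g' : ℕ → Fin l × ℝ} {n : ℕ} (h : ∀ i < n, g i = g' i) (v : Fin l → ℝ) :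
    Rf g n v = Rf g' n v := by
  induction n with
  | zero => rfl
  | succ n ih =>
      show stepf (Rf g n v) (g n) = stepf (Rf g' n v) (g' n)
      rw [ih (fun i hi => h i (hi.trans (Nat.lt_succ_self n))), h n (Nat.lt_succ_self n)]

lemma stepf_mem {v : Fin l → ℝ} (h0 : ∀ i, 0 ≤ v i) (h1 : ∑ i, v i = 1) (p : Fin l × ℝ) :
    (∀ i, 0 ≤ stepf v p i) ∧ ∑ i, stepf v p i = 1 := by
  unfold stepf
  split
  · refine ⟨fun i => ?_, ?_⟩
    · rw [Pi.single_apply]; split <;> norm_num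
    · simp
  · exact ⟨h0, h1⟩

lemma Rf_mem {g : ℕ → Fin l × ℝ} {v : Fin l → ℝ} (h0 : ∀ i, 0 ≤ v i) (h1 : ∑ i, v i = 1)
    (n : ℕ) : (∀ i, 0 ≤ Rf g n v i) ∧ ∑ i, Rf g n v i = 1 := by
  induction n with
  | zero => exact ⟨h0, h1⟩
  | succ n ih => exact stepf_mem ih.1 ih.2 (g n)

lemma mem_abs_le {w : Fin l → ℝ} (h0 : ∀ i, 0 ≤ w i) (h1 : ∑ i, w i = 1) (i : Fin l) :
    |w i| ≤ 1 := by
  rw [abs_of_nonneg (h0 i)]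
  calc w i ≤ ∑ j, w j := Finset.single_le_sum (fun j _ => h0 j) (Finset.mem_univ i)
  _ = 1 := h1

lemma measurable_stepf_comp {α : Type*} [MeasurableSpace α] {W : α → Fin l → ℝ}
    {P : α → Fin l × ℝ} (hW : Measurable W) (hP : Measurable P) :
    Measurable fun x => stepf (W x) (P x) := by
  unfold stepf
  rw [measurable_pi_iff]
  intro j
  simp only [apply_ite (fun f : Fin l → ℝ => f j)]
  have hcond : MeasurableSet {x | (P x).2 < W x (P x).1} := by
    have hrw : {x | (P x).2 < W x (P x).1}
        = ⋃ a : Fin l, ({x | (P x).1 = a} ∩ {x | (P x).2 < W x a}) := by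
      ext x
      simp only [Set.mem_setOf_eq, Set.mem_iUnion, Set.mem_inter_iff]
      constructor
      · intro h; exact ⟨(P x).1, rfl, h⟩
      · rintro ⟨a, ha, h⟩; rw [ha]; exact h
    rw [hrw]
    refine MeasurableSet.iUnion fun a => MeasurableSet.inter ?_ ?_
    · exact (measurable_fst.comp hP) (measurableSet_singleton a)
    · exact measurableSet_lt (measurable_snd.comp hP) ((measurable_pi_apply a).comp hW)
  refine Measurable.ite hcond ?_ ?_
  · exact (measurable_of_countable (fun a : Fin l => Pi.single a (1:ℝ) j)).comp
      (measurable_fst.comp hP)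
  · exact (measurable_pi_apply j).comp hW

lemma measurable_Rf (n : ℕ) :
    Measurable fun q : (ℕ → Fin l × ℝ) × (Fin l → ℝ) => Rf q.1 n q.2 := by
  induction n with
  | zero => exact measurable_snd
  | succ n ih =>
      exact measurable_stepf_comp ih ((measurable_pi_apply n).comp measurable_fst)

/-- extend a finite tuple to a sequence -/
noncomputable def extendF (k : ℕ) (γ : Fin k → Fin l × ℝ) : ℕ → Fin l × ℝ :=
  fun i => if h : i < k then γ ⟨i, h⟩ else (⟨0, Nat.pos_of_ne_zero (NeZero.ne l)⟩, 0)

lemma measurable_extendF (k : ℕ) : Measurable (extendF (l := l) k) := by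
  rw [measurable_pi_iff]
  intro i
  by_cases h : i < k
  · simp only [extendF, dif_pos h]; exact measurable_pi_apply _
  · simp only [extendF, dif_neg h]; exact measurable_const

instance inst_s8 : IsProbabilityMeasure (volume.restrict (Set.Icc (0:ℝ) 1)) :=
  ⟨by simp⟩


lemma stepf_abs_le {v : Fin l → ℝ} (h0 : ∀ i, 0 ≤ v i) (h1 : ∑ i, v i = 1) (p : Fin l × ℝ)
    (j : Fin l) : |stepf v p j| ≤ 1 :=
  mem_abs_le (stepf_mem h0 h1 p).1 (stepf_mem h0 h1 p).2 j

lemma Rf_abs_le {g : ℕ → Fin l × ℝ} {v : Fin l → ℝ} (h0 : ∀ i, 0 ≤ v i) (h1 : ∑ i, v i = 1)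
    (n : ℕ) (j : Fin l) : |Rf g n v j| ≤ 1 :=
  mem_abs_le (Rf_mem h0 h1 n).1 (Rf_mem h0 h1 n).2 j

lemma measurable_Rf_extend (k n : ℕ) (v : Fin l → ℝ) :
    Measurable fun γ : Fin k → Fin l × ℝ => Rf (extendF k γ) n v :=
  (measurable_Rf n).comp ((measurable_extendF k).prodMk measurable_const)

lemma integral_stepf (v : Fin l → ℝ) (h0 : ∀ i, 0 ≤ v i) (hsum : ∑ i, v i = 1) (j : Fin l) :
    ∫ p, stepf v p j
        ∂((PMF.uniformOfFintype (Fin l)).toMeasure.prod (volume.restrict (Set.Icc (0:ℝ) 1)))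
      = v j := by
  have hle : ∀ i, v i ≤ 1 := fun i => by
    calc v i ≤ ∑ j, v j := Finset.single_le_sum (fun j _ => h0 j) (Finset.mem_univ i)
    _ = 1 := hsum
  set μl := (PMF.uniformOfFintype (Fin l)).toMeasure with hμl
  set μα := volume.restrict (Set.Icc (0:ℝ) 1) with hμα
  have hm : Measurable fun p : Fin l × ℝ => stepf v p j :=
    (measurable_pi_apply j).comp (measurable_stepf_comp measurable_const measurable_id)
  have hint : Integrable (fun p => stepf v p j) (μl.prod μα) := by
    refine Integrable.mono' (integrable_const 1) hm.aestronglyMeasurable ?_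
    exact Filter.Eventually.of_forall fun p => by
      simpa using stepf_abs_le h0 hsum p j
  rw [MeasureTheory.integral_prod _ hint]
  have inner : ∀ a : Fin l,
      (∫ α, stepf v (a, α) j ∂μα) = ((Pi.single a 1 : Fin l → ℝ) j - v j) * v a + v j := by
    intro a
    have hrepr : (fun α => stepf v (a, α) j)
        = fun α => (Set.Iio (v a)).indicator (fun _ => (Pi.single a 1 : Fin l → ℝ) j - v j) α + v j := by
      funext α
      by_cases h : α < v a
      · simp [stepf, Set.indicator_apply, h]
      · simp [stepf, Set.indicator_apply, h]
    rw [hrepr, integral_add ((integrable_const _).indicator measurableSet_Iio)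
      (integrable_const _)]
    rw [integral_indicator_const _ measurableSet_Iio, integral_const]
    have hμ : μα (Set.Iio (v a)) = ENNReal.ofReal (v a) := by
      rw [hμα, Measure.restrict_apply measurableSet_Iio]
      have hset : Set.Iio (v a) ∩ Set.Icc 0 1 = Set.Ico 0 (v a) := by
        ext x
        simp only [Set.mem_inter_iff, Set.mem_Iio, Set.mem_Icc, Set.mem_Ico]
        constructor
        · rintro ⟨hx1, hx2, _⟩; exact ⟨hx2, hx1⟩
        · rintro ⟨hx1, hx2⟩; exact ⟨hx2, hx1, hx2.le.trans (hle a)⟩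
      rw [hset, Real.volume_Ico, sub_zero]
    rw [measureReal_def, measureReal_def, hμ, ENNReal.toReal_ofReal (h0 a), measure_univ]
    simp [smul_eq_mul]
    ring
  rw [show (fun a => ∫ α, stepf v (a, α) j ∂μα)
      = fun a => ((Pi.single a 1 : Fin l → ℝ) j - v j) * v a + v j from funext inner]
  rw [hμl, PMF.integral_eq_sum]
  have hcast : ∀ a : Fin l, ((PMF.uniformOfFintype (Fin l)) a).toReal = (l:ℝ)⁻¹ := by
    intro a
    simp [PMF.uniformOfFintype_apply]
  simp only [hcast, smul_eq_mul]
  rw [← Finset.mul_sum]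
  have hsingle : ∑ a : Fin l, (Pi.single a 1 : Fin l → ℝ) j * v a = v j := by
    have h1 : ∀ a : Fin l, (Pi.single a 1 : Fin l → ℝ) j * v a = if j = a then v a else 0 := by
      intro a; rw [Pi.single_apply]; split <;> simp
    simp only [h1]
    simp
  have hbig : ∑ a : Fin l, (((Pi.single a 1 : Fin l → ℝ) j - v j) * v a + v j) = v j * l := by
    simp only [sub_mul, Finset.sum_add_distrib, Finset.sum_sub_distrib, hsingle,
      ← Finset.mul_sum, hsum, Finset.sum_const, Finset.card_univ, Fintype.card_fin,
      nsmul_eq_mul]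
    ring
  rw [hbig]
  have hl : (l:ℝ) ≠ 0 := Nat.cast_ne_zero.mpr (NeZero.ne l)
  field_simp


lemma key_integral (k : ℕ) (v : Fin l → ℝ) (h0 : ∀ i, 0 ≤ v i) (hsum : ∑ i, v i = 1)
    (j : Fin l) :
    ∫ γ, Rf (extendF k γ) k v j
        ∂(Measure.pi fun _ : Fin k =>
          (PMF.uniformOfFintype (Fin l)).toMeasure.prod (volume.restrict (Set.Icc (0:ℝ) 1)))
      = v j := by
  induction k generalizing v with
  | zero =>
      show ∫ _, v j ∂_ = v j
      simp
  | succ k ih =>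
      set ν := (PMF.uniformOfFintype (Fin l)).toMeasure.prod
        (volume.restrict (Set.Icc (0:ℝ) 1)) with hν
      set e := MeasurableEquiv.piFinSuccAbove (fun _ : Fin (k+1) => Fin l × ℝ) (Fin.last k)
        with he
      have hmp : MeasurePreserving e.symm
          (ν.prod (Measure.pi fun _ : Fin k => ν))
          (Measure.pi fun _ : Fin (k+1) => ν) :=
        (measurePreserving_piFinSuccAbove (fun _ : Fin (k+1) => ν) (Fin.last k)).symm e
      have hcomp := hmp.integral_comp' (f := e.symm)
        (fun γ => Rf (extendF (k+1) γ) (k+1) v j)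
      rw [← hcomp]
      have hFsymm : ∀ p : (Fin l × ℝ) × (Fin k → Fin l × ℝ),
          Rf (extendF (k+1) (e.symm p)) (k+1) v j
            = stepf (Rf (extendF k p.2) k v) p.1 j := by
        intro p
        have hsymm : (e.symm p : Fin (k+1) → Fin l × ℝ) = Fin.snoc p.2 p.1 := by
          rw [he]
          simp [MeasurableEquiv.piFinSuccAbove_symm_apply, Fin.insertNthEquiv,
            Fin.insertNth_last']
        rw [hsymm]
        show stepf (Rf (extendF (k+1) (Fin.snoc p.2 p.1)) k v)
          (extendF (k+1) (Fin.snoc p.2 p.1) k) j = _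
        have h1 : extendF (k+1) (Fin.snoc p.2 p.1) k = p.1 := by
          simp only [extendF, dif_pos (Nat.lt_succ_self k)]
          exact Fin.snoc_last _ _ ▸ rfl
        have h2 : Rf (extendF (k+1) (Fin.snoc p.2 p.1)) k v = Rf (extendF k p.2) k v := by
          refine Rf_congr (fun i hi => ?_) v
          have hik1 : i < k + 1 := hi.trans (Nat.lt_succ_self k)
          simp only [extendF, dif_pos hik1, dif_pos hi]
          have : (⟨i, hik1⟩ : Fin (k+1)) = Fin.castSucc ⟨i, hi⟩ := rfl
          rw [this, Fin.snoc_castSucc]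
        rw [h1, h2]
      rw [show (fun p : (Fin l × ℝ) × (Fin k → Fin l × ℝ) =>
          Rf (extendF (k+1) (e.symm p)) (k+1) v j)
        = fun p => stepf (Rf (extendF k p.2) k v) p.1 j from funext hFsymm]
      have hmeas : Measurable fun p : (Fin l × ℝ) × (Fin k → Fin l × ℝ) =>
          stepf (Rf (extendF k p.2) k v) p.1 j :=
        (measurable_pi_apply j).comp
          (measurable_stepf_comp ((measurable_Rf_extend k k v).comp measurable_snd)
            measurable_fst)
      have hint : Integrable
          (fun p : (Fin l × ℝ) × (Fin k → Fin l × ℝ) =>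
            stepf (Rf (extendF k p.2) k v) p.1 j)
          (ν.prod (Measure.pi fun _ : Fin k => ν)) := by
        refine Integrable.mono' (integrable_const 1) hmeas.aestronglyMeasurable ?_
        refine Filter.Eventually.of_forall fun p => ?_
        simpa using stepf_abs_le (Rf_mem h0 hsum k).1 (Rf_mem h0 hsum k).2 p.1 j
      rw [MeasureTheory.integral_prod_symm _ hint]
      have hinner : ∀ γ' : Fin k → Fin l × ℝ,
          (∫ a, stepf (Rf (extendF k γ') k v) a j ∂ν)
            = Rf (extendF k γ') k v j := fun γ' =>
        integral_stepf _ (Rf_mem h0 hsum k).1 (Rf_mem h0 hsum k).2 j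
      rw [show (fun γ' : Fin k → Fin l × ℝ =>
          ∫ a, stepf (Rf (extendF k γ') k v) a j ∂ν)
        = fun γ' => Rf (extendF k γ') k v j from funext hinner]
      exact ih v h0 hsum


end Aux

/-- Let `Ω = (0,1)^m`, `u : Ω → Δ_l` measurable, `s ∈ L¹(Ω)^l`. For a finite
sequence `γ = (γ^1, …, γ^k)` of (label, threshold) pairs let `u^k_γ` be the rounding recursion
`u^0_γ = u`, `u^{k'}_γ(x) = e^{i^{k'}}` if `u^{k'-1}_{γ,i^{k'}}(x) > α^{k'}` and
`u^{k'}_γ(x) = u^{k'-1}_γ(x)` otherwise. Then the expected data term over `γ` drawn from the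
`k`-fold product of the uniform measure on `{1,…,l} × [0,1]` equals the data term of `u`:
`E_γ ∫_Ω ⟨u^k_γ, s⟩ = ∫_Ω ⟨u, s⟩`. -/
theorem stmt_8 (m l k : ℕ) (hm : 1 ≤ m) [NeZero l]
    (Ω : Set (Fin m → ℝ)) (hΩ : Ω = Set.pi Set.univ fun _ : Fin m => Set.Ioo (0:ℝ) 1)
    (u : (Fin m → ℝ) → Fin l → ℝ) (hu : Measurable u)
    (huΔ : ∀ x ∈ Ω, (∀ i, 0 ≤ u x i) ∧ ∑ i, u x i = 1)
    (s : (Fin m → ℝ) → Fin l → ℝ)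
    (hs : ∀ j, IntegrableOn (fun x => s x j) Ω volume)
    (π : Measure (Fin k → Fin l × ℝ))
    (hπ : π = Measure.pi fun _ => (PMF.uniformOfFintype (Fin l)).toMeasure.prod
      (volume.restrict (Set.Icc (0:ℝ) 1)))
    (U : (Fin k → Fin l × ℝ) → ℕ → (Fin m → ℝ) → Fin l → ℝ)
    (hU0 : ∀ γ, U γ 0 = u)
    (hUstep : ∀ γ, ∀ n : Fin k, ∀ x,
      ((γ n).2 < U γ n x (γ n).1 → U γ ((n : ℕ) + 1) x = Pi.single (γ n).1 1) ∧
      (¬ (γ n).2 < U γ n x (γ n).1 → U γ ((n : ℕ) + 1) x = U γ n x)) :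
    ∫ γ, (∫ x in Ω, ∑ j, U γ k x j * s x j ∂volume) ∂π
      = ∫ x in Ω, ∑ j, u x j * s x j ∂volume := by
  subst hπ
  have hΩm : MeasurableSet Ω := by
    rw [hΩ]; exact MeasurableSet.univ_pi fun _ => measurableSet_Ioo
  -- identification of U with the explicit recursion Rf
  have hUR : ∀ γ x, ∀ n ≤ k, U γ n x = Rf (extendF k γ) n (u x) := by
    intro γ x n
    induction n with
    | zero => intro _; rw [hU0]; rfl
    | succ n ih =>
        intro hn
        have hnk : n < k := hn
        have hE : extendF k γ n = γ ⟨n, hnk⟩ := by simp [extendF, hnk]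
        show U γ (n+1) x = stepf (Rf (extendF k γ) n (u x)) (extendF k γ n)
        rw [hE, ← ih hnk.le]
        by_cases hc : (γ ⟨n, hnk⟩).2 < U γ n x (γ ⟨n, hnk⟩).1
        · rw [(hUstep γ ⟨n, hnk⟩ x).1 hc, stepf, if_pos hc]
        · rw [(hUstep γ ⟨n, hnk⟩ x).2 hc, stepf, if_neg hc]
  set ν := (PMF.uniformOfFintype (Fin l)).toMeasure.prod
    (volume.restrict (Set.Icc (0:ℝ) 1)) with hν
  set π' := Measure.pi fun _ : Fin k => ν with hπ'
  -- Step 1: replace U by Rf inside the integral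
  have h1 : ∫ γ, (∫ x in Ω, ∑ j, U γ k x j * s x j ∂volume) ∂π'
      = ∫ γ, (∫ x in Ω, ∑ j, Rf (extendF k γ) k (u x) j * s x j ∂volume) ∂π' := by
    refine integral_congr_ae (Filter.Eventually.of_forall fun γ => ?_)
    refine integral_congr_ae (Filter.Eventually.of_forall fun x => ?_)
    simp only []
    rw [hUR γ x k le_rfl]
  rw [h1]
  -- integrability on the product for Fubini
  have hWmeas : ∀ j : Fin l, Measurable fun p : (Fin k → Fin l × ℝ) × (Fin m → ℝ) =>
      Rf (extendF k p.1) k (u p.2) j := fun j =>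
    (measurable_pi_apply j).comp
      ((measurable_Rf k).comp
        (((measurable_extendF k).comp measurable_fst).prodMk (hu.comp measurable_snd)))
  have hSaesm : ∀ j : Fin l, AEStronglyMeasurable
      (fun p : (Fin k → Fin l × ℝ) × (Fin m → ℝ) => s p.2 j)
      (π'.prod (volume.restrict Ω)) := fun j =>
    ((hs j).1.comp_quasiMeasurePreserving Measure.quasiMeasurePreserving_snd)
  have hGaesm : AEStronglyMeasurable
      (fun p : (Fin k → Fin l × ℝ) × (Fin m → ℝ) =>
        ∑ j, Rf (extendF k p.1) k (u p.2) j * s p.2 j)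
      (π'.prod (volume.restrict Ω)) := by
    refine Finset.aestronglyMeasurable_fun_sum _ fun j _ => ?_
    exact ((hWmeas j).aestronglyMeasurable.mul (hSaesm j))
  have hgint : Integrable
      (fun p : (Fin k → Fin l × ℝ) × (Fin m → ℝ) => ∑ j, |s p.2 j|)
      (π'.prod (volume.restrict Ω)) := by
    have hbase : Integrable (fun x => ∑ j, |s x j|) (volume.restrict Ω) :=
      integrable_finset_sum _ fun j _ => (hs j).abs
    have hmap : Measure.map Prod.snd (π'.prod (volume.restrict Ω))
        = volume.restrict Ω := by
      rw [Measure.map_snd_prod, measure_univ, one_smul]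
    have := (integrable_map_measure (f := Prod.snd)
      (μ := π'.prod (volume.restrict Ω)) (g := fun x => ∑ j, |s x j|)
      (by rw [hmap]; exact hbase.aestronglyMeasurable)
      measurable_snd.aemeasurable).mp (by rw [hmap]; exact hbase)
    exact this
  have haeΩ : ∀ᵐ p : (Fin k → Fin l × ℝ) × (Fin m → ℝ)
      ∂(π'.prod (volume.restrict Ω)), p.2 ∈ Ω :=
    Measure.quasiMeasurePreserving_snd.ae (ae_restrict_mem hΩm)
  have hGint : Integrable
      (fun p : (Fin k → Fin l × ℝ) × (Fin m → ℝ) =>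
        ∑ j, Rf (extendF k p.1) k (u p.2) j * s p.2 j)
      (π'.prod (volume.restrict Ω)) := by
    refine Integrable.mono' hgint hGaesm ?_
    refine haeΩ.mono fun p hp => ?_
    obtain ⟨h0, hsum⟩ := huΔ p.2 hp
    calc ‖∑ j, Rf (extendF k p.1) k (u p.2) j * s p.2 j‖
        ≤ ∑ j, ‖Rf (extendF k p.1) k (u p.2) j * s p.2 j‖ := norm_sum_le _ _
      _ ≤ ∑ j, |s p.2 j| := by
          refine Finset.sum_le_sum fun j _ => ?_
          rw [Real.norm_eq_abs, abs_mul]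
          calc |Rf (extendF k p.1) k (u p.2) j| * |s p.2 j|
              ≤ 1 * |s p.2 j| := by
                exact mul_le_mul_of_nonneg_right (Rf_abs_le h0 hsum k j) (abs_nonneg _)
            _ = |s p.2 j| := one_mul _
  -- Step 2: Fubini
  have h2 : ∫ γ, (∫ x in Ω, ∑ j, Rf (extendF k γ) k (u x) j * s x j ∂volume) ∂π'
      = ∫ x in Ω, (∫ γ, ∑ j, Rf (extendF k γ) k (u x) j * s x j ∂π') ∂volume :=
    integral_integral_swap hGint
  rw [h2]
  -- Step 3: pointwise in x
  refine setIntegral_congr_fun hΩm fun x hx => ?_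
  obtain ⟨h0, hsum⟩ := huΔ x hx
  have hintj : ∀ j : Fin l, Integrable
      (fun γ : Fin k → Fin l × ℝ => Rf (extendF k γ) k (u x) j * s x j) π' := by
    intro j
    refine Integrable.mul_const ?_ _
    refine Integrable.mono' (integrable_const 1)
      ((measurable_pi_apply j).comp (measurable_Rf_extend k k (u x))).aestronglyMeasurable
      (Filter.Eventually.of_forall fun γ => ?_)
    simpa using Rf_abs_le h0 hsum k j
  rw [integral_finset_sum _ fun j _ => hintj j]
  refine Finset.sum_congr rfl fun j _ => ?_
  rw [integral_mul_const, key_integral k (u x) h0 hsum j]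
end

section
/- Let l ≥ 2, m ≥ 1, and let d be a metric on {1,...,l}. Then for every ν ∈ ℝ^m with ‖ν‖₂ = 1 and all i, j ∈ {1,...,l}, Ψ_d(ν (e^i − e^j)ᵀ) = d(i,j). In particular, Ψ_d satisfies the upper-boundedness condition with λ_u = max_{i,j ∈ {1,...,l}} d(i,j). -/
/-- The local constraint set `D_loc^d` for a metric `d` on the labels:
matrices `v ∈ ℝ^{m×l}` with `‖v^i − v^j‖₂ ≤ d(i,j)` for all `i,j` and columns summing to 0. -/
def Dloc (m l : ℕ) (d : Fin l → Fin l → ℝ) : Set (Matrix (Fin m) (Fin l) ℝ) :=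
  {v | (∀ i j, Real.sqrt (∑ a, (v a i - v a j) ^ 2) ≤ d i j) ∧ ∀ a, ∑ i, v a i = 0}

/-- `Ψ_d(z) = sup_{v ∈ D_loc^d} ⟨z, v⟩` (Frobenius inner product). -/
noncomputable def Psid (m l : ℕ) (d : Fin l → Fin l → ℝ)
    (z : Matrix (Fin m) (Fin l) ℝ) : ℝ :=
  sSup ((fun v : Matrix (Fin m) (Fin l) ℝ => ∑ a, ∑ i, z a i * v a i) '' Dloc m l d)

/-- For a metric `d` on `{1,…,l}` (`l ≥ 2`, `m ≥ 1`),
`Ψ_d(ν (e^i − e^j)ᵀ) = d(i,j)` for every unit vector `ν ∈ ℝ^m` and all `i, j`; in particular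
`Ψ_d` satisfies the upper-boundedness condition with `λ_u = max_{i,j} d(i,j)`. -/
theorem stmt_9 (m l : ℕ) (hm : 1 ≤ m) (hl : 2 ≤ l)
    (d : Fin l → Fin l → ℝ)
    (hd0 : ∀ i, d i i = 0)
    (hdsymm : ∀ i j, d i j = d j i)
    (hdpos : ∀ i j, i ≠ j → 0 < d i j)
    (hdtri : ∀ i j r, d i r ≤ d i j + d j r) :
    (∀ ν : Fin m → ℝ, Real.sqrt (∑ a, ν a ^ 2) = 1 →
      ∀ i j : Fin l,
        Psid m l d (Matrix.vecMulVec ν (Pi.single i 1 - Pi.single j 1)) = d i j) ∧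
    (∀ lamu : ℝ, IsGreatest {x : ℝ | ∃ i j : Fin l, x = d i j} lamu →
      ∀ ν : Fin m → ℝ, Real.sqrt (∑ a, ν a ^ 2) = 1 →
      ∀ i j : Fin l,
        Psid m l d (Matrix.vecMulVec ν (Pi.single i 1 - Pi.single j 1)) ≤ lamu) := by
  have hl0 : (l : ℝ) ≠ 0 := Nat.cast_ne_zero.mpr (by omega)
  have hdnn : ∀ p q : Fin l, 0 ≤ d p q := by
    intro p q
    have h1 := hdtri p q p
    have h2 := hd0 p
    have h3 := hdsymm p q
    linarith
  have key : ∀ ν : Fin m → ℝ, Real.sqrt (∑ a, ν a ^ 2) = 1 →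
      ∀ i j : Fin l,
        Psid m l d (Matrix.vecMulVec ν (Pi.single i 1 - Pi.single j 1)) = d i j := by
    intro ν hν i j
    have hnn : (0:ℝ) ≤ ∑ a, ν a ^ 2 := Finset.sum_nonneg fun a _ => sq_nonneg _
    have hsum : ∑ a, ν a ^ 2 = 1 := by
      have := Real.sq_sqrt hnn
      nlinarith [hν]
    -- inner product formula
    have hz : ∀ v : Matrix (Fin m) (Fin l) ℝ,
        ∑ a, ∑ b, (Matrix.vecMulVec ν (Pi.single i 1 - Pi.single j 1)) a b * v a b
          = ∑ a, ν a * (v a i - v a j) := by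
      intro v
      refine Finset.sum_congr rfl fun a _ => ?_
      simp only [Matrix.vecMulVec_apply, Pi.sub_apply, Pi.single_apply, sub_mul, mul_sub,
        ite_mul, one_mul, zero_mul, mul_ite, mul_one, mul_zero, Finset.sum_sub_distrib,
        Finset.sum_ite_eq', Finset.mem_univ, if_true]
    -- upper bound
    have hub : ∀ x ∈ (fun v : Matrix (Fin m) (Fin l) ℝ =>
        ∑ a, ∑ b, (Matrix.vecMulVec ν (Pi.single i 1 - Pi.single j 1)) a b * v a b) ''
        Dloc m l d, x ≤ d i j := by
      rintro x ⟨v, ⟨hv1, _⟩, rfl⟩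
      dsimp only
      rw [hz v]
      have hg : (0:ℝ) ≤ ∑ a, (v a i - v a j) ^ 2 := Finset.sum_nonneg fun a _ => sq_nonneg _
      have hcs := Finset.sum_mul_sq_le_sq_mul_sq Finset.univ ν (fun a => v a i - v a j)
      have h1 : ∑ a, ν a * (v a i - v a j) ≤ Real.sqrt (∑ a, (v a i - v a j) ^ 2) := by
        have h2 : (∑ a, ν a * (v a i - v a j)) ^ 2 ≤ ∑ a, (v a i - v a j) ^ 2 := by
          calc (∑ a, ν a * (v a i - v a j)) ^ 2
              ≤ (∑ a, ν a ^ 2) * ∑ a, (v a i - v a j) ^ 2 := hcs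
            _ = ∑ a, (v a i - v a j) ^ 2 := by rw [hsum, one_mul]
        calc ∑ a, ν a * (v a i - v a j)
            ≤ |∑ a, ν a * (v a i - v a j)| := le_abs_self _
          _ = Real.sqrt ((∑ a, ν a * (v a i - v a j)) ^ 2) := (Real.sqrt_sq_eq_abs _).symm
          _ ≤ Real.sqrt (∑ a, (v a i - v a j) ^ 2) := Real.sqrt_le_sqrt h2
      exact h1.trans (hv1 i j)
    -- witness
    set c : Fin l → ℝ := fun k => d j k - (∑ r, d j r) / l with hc
    set v₀ : Matrix (Fin m) (Fin l) ℝ := Matrix.of fun a k => ν a * c k with hv0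
    have hcdiff : ∀ p q : Fin l, |c p - c q| ≤ d p q := by
      intro p q
      have h1 := hdtri j q p
      have h2 := hdtri j p q
      have h3 := hdsymm q p
      rw [abs_sub_le_iff]
      constructor <;> simp only [hc] <;> ring_nf <;> linarith
    have hmem : v₀ ∈ Dloc m l d := by
      constructor
      · intro p q
        have : ∀ a : Fin m, (v₀ a p - v₀ a q) ^ 2 = (c p - c q) ^ 2 * ν a ^ 2 := by
          intro a; simp only [hv0, Matrix.of_apply]; ring
        rw [Finset.sum_congr rfl fun a _ => this a, ← Finset.mul_sum, hsum, mul_one,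
          Real.sqrt_sq_eq_abs]
        exact hcdiff p q
      · intro a
        have : ∑ k, v₀ a k = ν a * ∑ k, c k := by
          simp only [hv0, Matrix.of_apply, Finset.mul_sum]
        rw [this]
        have hck : ∑ k, c k = 0 := by
          simp only [hc, Finset.sum_sub_distrib, Finset.sum_const, Finset.card_univ,
            Fintype.card_fin, nsmul_eq_mul]
          field_simp
          ring
        rw [hck, mul_zero]
    have hval : ∑ a, ∑ b, (Matrix.vecMulVec ν (Pi.single i 1 - Pi.single j 1)) a b * v₀ a b
        = d i j := by
      rw [hz v₀]
      have : ∀ a : Fin m, ν a * (v₀ a i - v₀ a j) = (c i - c j) * ν a ^ 2 := by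
        intro a; simp only [hv0, Matrix.of_apply]; ring
      rw [Finset.sum_congr rfl fun a _ => this a, ← Finset.mul_sum, hsum, mul_one]
      simp only [hc, hd0, hdsymm i j]
      ring
    have hbdd : BddAbove ((fun v : Matrix (Fin m) (Fin l) ℝ =>
        ∑ a, ∑ b, (Matrix.vecMulVec ν (Pi.single i 1 - Pi.single j 1)) a b * v a b) ''
        Dloc m l d) := ⟨d i j, hub⟩
    apply le_antisymm
    · exact Real.sSup_le hub (hdnn i j)
    · rw [← hval]
      exact le_csSup hbdd ⟨v₀, hmem, rfl⟩
  refine ⟨key, ?_⟩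
  intro lamu hlam ν hν i j
  rw [key ν hν i j]
  exact hlam.2 ⟨i, j, rfl⟩
end

section
/- Let l ≥ 2, m ≥ 1, and let d be a metric on {1,...,l}. Set c = min_{i ≠ j} d(i,j). Then the function Ψ_d satisfies the lower-boundedness condition with λ_l = c: for every w = (w^1|...|w^l) ∈ ℝ^{m×l} with ∑_{i=1}^l w^i = 0, one has Ψ_d(w) ≥ (c/2) ∑_{i=1}^l ‖w^i‖₂. -/
lemma sqrt_sum_sq_eq_norm {m : ℕ} (x : Fin m → ℝ) :
    Real.sqrt (∑ a, x a ^ 2) = ‖(WithLp.equiv 2 (Fin m → ℝ)).symm x‖ := by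
  rw [EuclideanSpace.norm_eq]
  congr 1
  refine Finset.sum_congr rfl fun a _ => ?_
  simp [Real.norm_eq_abs, sq_abs]

lemma sqrt_sub_le {m : ℕ} (x y : Fin m → ℝ) :
    Real.sqrt (∑ a, (x a - y a) ^ 2) ≤
      Real.sqrt (∑ a, x a ^ 2) + Real.sqrt (∑ a, y a ^ 2) := by
  have h := sqrt_sum_sq_eq_norm (fun a => x a - y a)
  rw [h, sqrt_sum_sq_eq_norm x, sqrt_sum_sq_eq_norm y]
  have : (WithLp.equiv 2 (Fin m → ℝ)).symm (fun a => x a - y a)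
      = (WithLp.equiv 2 (Fin m → ℝ)).symm x - (WithLp.equiv 2 (Fin m → ℝ)).symm y := rfl
  rw [this]
  exact norm_sub_le _ _

lemma abs_le_sqrt_sum {m : ℕ} (x : Fin m → ℝ) (a : Fin m) :
    |x a| ≤ Real.sqrt (∑ b, x b ^ 2) := by
  rw [← Real.sqrt_sq_eq_abs]
  apply Real.sqrt_le_sqrt
  exact Finset.single_le_sum (fun b _ => sq_nonneg (x b)) (Finset.mem_univ a)

/-- For a metric `d` on `{1,…,l}` (`l ≥ 2`, `m ≥ 1`) and
`c = min_{i ≠ j} d(i,j)`, `Ψ_d` satisfies the lower-boundedness condition with `λ_l = c`: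
for every `w ∈ ℝ^{m×l}` with columns summing to zero, `Ψ_d(w) ≥ (c/2) ∑_i ‖w^i‖₂`. -/
theorem stmt_10 (m l : ℕ) (hm : 1 ≤ m) (hl : 2 ≤ l)
    (d : Fin l → Fin l → ℝ)
    (hd0 : ∀ i, d i i = 0)
    (hdsymm : ∀ i j, d i j = d j i)
    (hdpos : ∀ i j, i ≠ j → 0 < d i j)
    (hdtri : ∀ i j r, d i r ≤ d i j + d j r)
    (c : ℝ) (hc : IsLeast {x : ℝ | ∃ i j : Fin l, i ≠ j ∧ x = d i j} c) :
    ∀ w : Matrix (Fin m) (Fin l) ℝ, (∀ a, ∑ i, w a i = 0) →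
      c / 2 * ∑ i, Real.sqrt (∑ a, w a i ^ 2) ≤ Psid m l d w := by
  intro w hw
  obtain ⟨⟨i0, j0, hij0, hceq⟩, hlb⟩ := hc
  have hcpos : 0 < c := hceq ▸ hdpos i0 j0 hij0
  have hcle : ∀ i j : Fin l, i ≠ j → c ≤ d i j := fun i j h => hlb ⟨i, j, h, rfl⟩
  have hlpos : (0 : ℝ) < (l : ℝ) := by
    exact_mod_cast lt_of_lt_of_le (by norm_num) hl
  set n : Fin l → ℝ := fun i => Real.sqrt (∑ a, w a i ^ 2) with hn
  have hnnonneg : ∀ i, 0 ≤ n i := fun i => Real.sqrt_nonneg _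
  have hsumnn : ∀ i, (0 : ℝ) ≤ ∑ a, w a i ^ 2 :=
    fun i => Finset.sum_nonneg fun a _ => sq_nonneg _
  have hnsq : ∀ i, n i ^ 2 = ∑ a, w a i ^ 2 := fun i => Real.sq_sqrt (hsumnn i)
  have hnzero : ∀ i, n i = 0 → ∀ a, w a i = 0 := by
    intro i hi a
    have h0 : ∑ b, w b i ^ 2 = 0 := by
      have := hnsq i; rw [hi] at this; simpa using this.symm
    have := (Finset.sum_eq_zero_iff_of_nonneg (fun b _ => sq_nonneg (w b i))).mp h0 a
      (Finset.mem_univ a)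
    exact pow_eq_zero_iff (by norm_num) |>.mp this
  set u : Matrix (Fin m) (Fin l) ℝ := fun a i => c / 2 * (w a i / n i) with hu
  -- column norms of u are ≤ c/2
  have hun : ∀ i, Real.sqrt (∑ a, u a i ^ 2) ≤ c / 2 := by
    intro i
    by_cases h : n i = 0
    · have : ∀ a, u a i = 0 := by
        intro a; simp [hu, hnzero i h a]
      simp [this]
      positivity
    · have hsum : ∑ a, u a i ^ 2 = (c / 2) ^ 2 := by
        have : ∀ a, u a i ^ 2 = (c / 2) ^ 2 / n i ^ 2 * w a i ^ 2 := by
          intro a; simp [hu]; field_simp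
        rw [Finset.sum_congr rfl fun a _ => this a, ← Finset.mul_sum, ← hnsq i]
        field_simp
      rw [hsum, Real.sqrt_sq (by positivity)]
  -- inner product of w-column with u-column
  have hwu : ∀ i, ∑ a, w a i * u a i = c / 2 * n i := by
    intro i
    by_cases h : n i = 0
    · have : ∀ a, w a i = 0 := hnzero i h
      simp [this, h]
    · have : ∀ a, w a i * u a i = c / 2 / n i * w a i ^ 2 := by
        intro a; simp [hu]; ring
      rw [Finset.sum_congr rfl fun a _ => this a, ← Finset.mul_sum, ← hnsq i]
      field_simp
  set v : Matrix (Fin m) (Fin l) ℝ := fun a i => u a i - (∑ j, u a j) / l with hv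
  have hvmem : v ∈ Dloc m l d := by
    constructor
    · intro i j
      have hdiff : ∀ a, v a i - v a j = u a i - u a j := by
        intro a; simp [hv]
      rw [Finset.sum_congr rfl fun a _ => by rw [hdiff a]]
      rcases eq_or_ne i j with rfl | hij
      · simp [hd0 i]
      · calc Real.sqrt (∑ a, (u a i - u a j) ^ 2)
            ≤ Real.sqrt (∑ a, u a i ^ 2) + Real.sqrt (∑ a, u a j ^ 2) :=
              sqrt_sub_le (fun a => u a i) (fun a => u a j)
          _ ≤ c / 2 + c / 2 := add_le_add (hun i) (hun j)
          _ = c := by ring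
          _ ≤ d i j := hcle i j hij
    · intro a
      rw [Finset.sum_sub_distrib, Finset.sum_const, Finset.card_fin]
      rw [nsmul_eq_mul]
      field_simp
      simp
  -- the value of the inner product at v
  have hval : ∑ a, ∑ i, w a i * v a i = c / 2 * ∑ i, n i := by
    have step : ∀ a, ∑ i, w a i * v a i = ∑ i, w a i * u a i := by
      intro a
      have : ∀ i, w a i * v a i = w a i * u a i - (∑ j, u a j) / l * w a i := by
        intro i; simp [hv]; ring
      rw [Finset.sum_congr rfl fun i _ => this i, Finset.sum_sub_distrib,
        ← Finset.mul_sum, hw a, mul_zero, sub_zero]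
    rw [Finset.sum_congr rfl fun a _ => step a, Finset.sum_comm,
      Finset.sum_congr rfl fun i _ => hwu i, ← Finset.mul_sum]
  -- the image set is bounded above
  have hbdd : BddAbove ((fun v : Matrix (Fin m) (Fin l) ℝ =>
      ∑ a, ∑ i, w a i * v a i) '' Dloc m l d) := by
    refine ⟨∑ a, ∑ i, |w a i| * ((∑ j, d i j) / l), ?_⟩
    rintro x ⟨v', ⟨hv1, hv2⟩, rfl⟩
    have hbound : ∀ a i, |v' a i| ≤ (∑ j, d i j) / l := by
      intro a i
      rw [le_div_iff₀ hlpos]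
      have heq : |v' a i| * l = |∑ j, (v' a i - v' a j)| := by
        rw [Finset.sum_sub_distrib, hv2 a, sub_zero, Finset.sum_const,
          Finset.card_fin, nsmul_eq_mul, abs_mul, abs_of_nonneg (le_of_lt hlpos)]
        ring
      rw [heq]
      calc |∑ j, (v' a i - v' a j)| ≤ ∑ j, |v' a i - v' a j| :=
            Finset.abs_sum_le_sum_abs _ _
        _ ≤ ∑ j, d i j := by
            refine Finset.sum_le_sum fun j _ => ?_
            exact le_trans (abs_le_sqrt_sum (fun b => v' b i - v' b j) a) (hv1 i j)
    calc ∑ a, ∑ i, w a i * v' a i ≤ ∑ a, ∑ i, |w a i * v' a i| := by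
          refine Finset.sum_le_sum fun a _ => Finset.sum_le_sum fun i _ => le_abs_self _
      _ ≤ ∑ a, ∑ i, |w a i| * ((∑ j, d i j) / l) := by
          refine Finset.sum_le_sum fun a _ => Finset.sum_le_sum fun i _ => ?_
          rw [abs_mul]
          exact mul_le_mul_of_nonneg_left (hbound a i) (abs_nonneg _)
  have : c / 2 * ∑ i, n i ∈ ((fun v : Matrix (Fin m) (Fin l) ℝ =>
      ∑ a, ∑ i, w a i * v a i) '' Dloc m l d) := ⟨v, hvmem, hval⟩
  exact le_csSup hbdd this
end

section
/- Let l ≥ 1, let Ω be an arbitrary set, let u : Ω → ℝ^l, and fix any finite sequence γ^1, ..., γ^k with γ^{k'} = (i^{k'}, α^{k'}) ∈ {1,...,l} × [0,1]. Define the sequence of Algorithm 1 by: U^0 = Ω, u^0 = u, and for k' ≥ 1, M^{k'} = U^{k'−1} ∩ {x ∈ Ω : u^{k'−1}_{i^{k'}}(x) > α^{k'}}, u^{k'} = e^{i^{k'}} on M^{k'} and u^{k'} = u^{k'−1} on Ω \ M^{k'}, U^{k'} = U^{k'−1} \ M^{k'}. Define the simplified sequence by v^0 = u and v^{k'}(x)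 = e^{i^{k'}} if v^{k'−1}_{i^{k'}}(x) > α^{k'}, and v^{k'}(x) = v^{k'−1}(x) otherwise. Then u^{k'} = v^{k'} on all of Ω for every 0 ≤ k' ≤ k; i.e., the simplified update without tracking the unassigned set produces exactly the same sequence of labelings as Algorithm 1. -/
/-- For any set `Ω`, any `u : Ω → ℝ^l` and any fixed finite parameter sequence
`γ^1, …, γ^k` in `{1,…,l} × [0,1]`, the sequence of Algorithm 1 (which tracks the unassigned
set `U`) coincides on all of `Ω` with the simplified sequence
`v^{k'}(x) = e^{i^{k'}}` if `v^{k'-1}_{i^{k'}}(x) > α^{k'}`, else `v^{k'-1}(x)`. -/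
theorem stmt_13 (l k : ℕ) (hl : 1 ≤ l)
    {Ω : Type*} (u : Ω → Fin l → ℝ)
    (γ : Fin k → Fin l × ℝ) (hγ : ∀ n, (γ n).2 ∈ Set.Icc (0:ℝ) 1)
    (uSeq : ℕ → Ω → Fin l → ℝ) (USeq : ℕ → Set Ω) (M : Fin k → Set Ω)
    (hu0 : uSeq 0 = u) (hU0 : USeq 0 = Set.univ)
    (hM : ∀ n : Fin k, M n = USeq n ∩ {x | (γ n).2 < uSeq n x ((γ n).1)})
    (hustep : ∀ n : Fin k, ∀ x : Ω,
      (x ∈ M n → uSeq ((n : ℕ) + 1) x = Pi.single (γ n).1 1) ∧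
      (x ∉ M n → uSeq ((n : ℕ) + 1) x = uSeq n x))
    (hUstep : ∀ n : Fin k, USeq ((n : ℕ) + 1) = USeq n \ M n)
    (vSeq : ℕ → Ω → Fin l → ℝ)
    (hv0 : vSeq 0 = u)
    (hvstep : ∀ n : Fin k, ∀ x : Ω,
      ((γ n).2 < vSeq n x ((γ n).1) → vSeq ((n : ℕ) + 1) x = Pi.single (γ n).1 1) ∧
      (¬ (γ n).2 < vSeq n x ((γ n).1) → vSeq ((n : ℕ) + 1) x = vSeq n x)) :
    ∀ n ≤ k, ∀ x : Ω, uSeq n x = vSeq n x := by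
  -- strengthened invariant: equality, plus points outside U carry a unit label
  suffices H : ∀ n ≤ k, ∀ x : Ω,
      uSeq n x = vSeq n x ∧ (x ∉ USeq n → ∃ j : Fin l, uSeq n x = Pi.single j 1) by
    intro n hn x; exact (H n hn x).1
  intro n
  induction n with
  | zero =>
    intro _ x
    refine ⟨by rw [hu0, hv0], fun hx => absurd (by rw [hU0]; trivial) hx⟩
  | succ m ih =>
    intro hmk x
    have hm : m < k := Nat.lt_of_succ_le hmk
    set nf : Fin k := ⟨m, hm⟩
    have ihx := ih (Nat.le_of_lt hm) x
    have heq := ihx.1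
    have hcoe : (nf : ℕ) = m := rfl
    by_cases hxM : x ∈ M nf
    · -- both update to the unit label
      have hu' := (hustep nf x).1 hxM
      have hcond : (γ nf).2 < vSeq m x ((γ nf).1) := by
        rw [hM nf] at hxM
        have := hxM.2
        simpa [hcoe, heq] using this
      have hv' := (hvstep nf x).1 hcond
      rw [hcoe] at hu' hv'
      refine ⟨hu'.trans hv'.symm, fun _ => ⟨(γ nf).1, hu'⟩⟩
    · have hu' := (hustep nf x).2 hxM
      rw [hcoe] at hu'
      by_cases hxU : x ∈ USeq m
      · -- x still unassigned: the threshold condition fails, both stay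
        have hcond : ¬ (γ nf).2 < vSeq m x ((γ nf).1) := by
          intro hc
          apply hxM
          rw [hM nf]
          exact ⟨hxU, by simpa [hcoe, heq] using hc⟩
        have hv' := (hvstep nf x).2 hcond
        rw [hcoe] at hv'
        refine ⟨by rw [hu', hv', heq], fun hx => ?_⟩
        exfalso; apply hx
        rw [hUstep nf, hcoe]
        exact ⟨hxU, hxM⟩
      · -- x already assigned: it carries a unit label `e^j`
        obtain ⟨j, hj⟩ := ihx.2 hxU
        have hxU' : x ∉ USeq (m + 1) := by
          rw [hUstep nf, hcoe]; intro hx; exact hxU hx.1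
        refine ⟨?_, fun _ => ⟨j, by rw [hu', hj]⟩⟩
        by_cases hcond : (γ nf).2 < vSeq m x ((γ nf).1)
        · -- the simplified step re-triggers, but only with the same label
          have hij : (γ nf).1 = j := by
            by_contra hne
            have : vSeq m x ((γ nf).1) = 0 := by
              rw [← heq, hj, Pi.single_apply, if_neg (by exact_mod_cast hne)]
            rw [this] at hcond
            exact absurd hcond (not_lt.mpr (hγ nf).1)
          have hv' := (hvstep nf x).1 hcond
          rw [hcoe] at hv'
          rw [hu', hv', hj, hij]
        · have hv' := (hvstep nf x).2 hcond
          rw [hcoe] at hv'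
          rw [hu', hv', heq]
end
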